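/- A weakly connected circuit-free digraph Γ is quasi-strongly connected (has a root, i.e., a node from which every other node is reachable by a directed path) if and only if every maximal spanning forest of Γ is an arborescence. -/

import Mathlib

open scoped Classical
open Finset

section Preamble

variable {V : Type*} [Fintype V] [DecidableEq V]

/-- Adjacency relation of a digraph given by its arc set. -/
def Adj (A : Finset (V × V)) (i j : V) : Prop := (i, j) ∈ A

/-- A digraph is circuit-free if it contains no directed cycle. -/
def CircuitFree (A : Finset (V × V)) : Prop :=
  ∀ i : V, ¬ Relation.TransGen (Adj A) i i

/-- In-degree of a node. -/
def inDeg (A : Finset (V × V)) (j : V) : ℕ :=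
  (A.filter (fun a => a.2 = j)).card

/-- Weak connectivity (chains, ignoring orientation). -/
def WConn (A : Finset (V × V)) (i j : V) : Prop :=
  Relation.ReflTransGen (fun a b => (a, b) ∈ A ∨ (b, a) ∈ A) i j

/-- The weakly connected component of `i`, as a finset. -/
noncomputable def compF (A : Finset (V × V)) (i : V) : Finset V :=
  Finset.univ.filter (fun j => WConn A i j)

/-- `IsPath A p` : `p` is a (nonempty) directed path along arcs of `A`. -/
def IsPath (A : Finset (V × V)) : List V → Prop
  | [] => False
  | [_] => True
  | i :: j :: l => (i, j) ∈ A ∧ IsPath A (j :: l)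

/-- The digraph `A` restricted to the node set `K` is an arborescence:
there is a root `r ∈ K` with a unique directed path from `r` to every node of `K`. -/
def IsArbOn (A : Finset (V × V)) (K : Set V) : Prop :=
  ∃ r ∈ K, ∀ i ∈ K, ∃! p : List V,
    IsPath A p ∧ p.head? = some r ∧ p.getLast? = some i

/-- A forest: every weakly connected component is an arborescence. -/
def IsForest (A : Finset (V × V)) : Prop :=
  ∀ i : V, IsArbOn A {j | WConn A i j}

/-- `F` is a maximal spanning forest of the digraph `A`. -/
def IsMaxSpanningForest (A F : Finset (V × V)) : Prop :=
  F ⊆ A ∧ IsForest F ∧ ∀ a ∈ A, a ∉ F → ¬ IsForest (insert a F)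

/-- The collection of all maximal spanning forests of `A`. -/
noncomputable def maxForests (A : Finset (V × V)) : Finset (Finset (V × V)) :=
  A.powerset.filter (fun F => IsMaxSpanningForest A F)

/-- `S̄_F(i)` : the node `i` together with all its successors in `F`. -/
noncomputable def succSet (F : Finset (V × V)) (i : V) : Finset V :=
  Finset.univ.filter (fun j => Relation.ReflTransGen (Adj F) i j)

/-- `Ŝ_F(i)` : the immediate successors of `i` in `F`. -/
noncomputable def immSucc (F : Finset (V × V)) (i : V) : Finset V :=
  Finset.univ.filter (fun j => (i, j) ∈ F)

/-- Marginal contribution of player `i` with respect to the forest `F`. -/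
noncomputable def marg (v : Finset V → ℝ) (F : Finset (V × V)) (i : V) : ℝ :=
  v (succSet F i) - ∑ j ∈ immSucc F i, v (succSet F j)

/-- The Average Forest leadership measure. -/
noncomputable def AF (v : Finset V → ℝ) (A : Finset (V × V)) (i : V) : ℝ :=
  (∑ F ∈ maxForests A, marg v F i) / (maxForests A).card

/-- The node sets of the arborescence components of a forest `F`. -/
noncomputable def comps (F : Finset (V × V)) : Finset (Finset V) :=
  Finset.univ.image (fun i => compF F i)

/-- Productivity of the organisational situation. -/
noncomputable def Productivity (v : Finset V → ℝ) (A : Finset (V × V)) : ℝ :=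
  (∑ F ∈ maxForests A, ∑ K ∈ comps F, v K) / (maxForests A).card

/-- Superadditivity of a TU game. -/
def Superadditive (v : Finset V → ℝ) : Prop :=
  ∀ S Q : Finset V, Disjoint S Q → v S + v Q ≤ v (S ∪ Q)

/-- Weak connectedness of the digraph. -/
def WeaklyConnected (A : Finset (V × V)) : Prop :=
  ∀ i j : V, WConn A i j

/-- Quasi-strong connectedness: existence of a root reaching every node. -/
def HasRoot (A : Finset (V × V)) : Prop :=
  ∃ r : V, ∀ i : V, Relation.ReflTransGen (Adj A) r i

end Preamble

section Aux
variable {V : Type*} [Fintype V] [DecidableEq V]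
set_option linter.unusedSectionVars false

lemma isPath_ne_nil {F : Finset (V × V)} {p : List V} (h : IsPath F p) : p ≠ [] := by
  cases p with
  | nil => exact absurd h (by simp [IsPath])
  | cons a l => simp

lemma isPath_cons {F : Finset (V × V)} {q : List V} {i j : V}
    (hij : (i, j) ∈ F) (hq : IsPath F q) (hh : q.head? = some j) : IsPath F (i :: q) := by
  cases q with
  | nil => exact absurd hq (by simp [IsPath])
  | cons a l => simp at hh; subst hh; exact ⟨hij, hq⟩

lemma isPath_rtg {F : Finset (V × V)} :
    ∀ (p : List V), IsPath F p → ∀ {a b : V}, p.head? = some a → p.getLast? = some b →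
      Relation.ReflTransGen (Adj F) a b := by
  intro p
  induction p with
  | nil => intro h; exact absurd h (by simp [IsPath])
  | cons i l ih =>
    cases l with
    | nil => intro _ a b ha hb; simp at ha hb; subst ha; subst hb; exact .refl
    | cons j l' =>
      intro h a b ha hb
      simp at ha; subst ha
      have hb' : (j :: l').getLast? = some b := by simpa using hb
      exact Relation.ReflTransGen.head h.1 (ih h.2 rfl hb')

lemma isPath_append {F : Finset (V × V)} :
    ∀ (p : List V) (y i : V), IsPath F p → p.getLast? = some y → (y, i) ∈ F →
      IsPath F (p ++ [i]) := by
  intro p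
  induction p with
  | nil => intro y i h; exact absurd h (by simp [IsPath])
  | cons a l ih =>
    cases l with
    | nil => intro y i _ hy hyi; simp at hy; subst hy; exact ⟨hyi, trivial⟩
    | cons j l' =>
      intro y i h hy hyi
      have hy' : (j :: l').getLast? = some y := by simpa using hy
      exact ⟨h.1, ih y i h.2 hy' hyi⟩

lemma head?_append_left {p : List V} (q : List V) (h : p ≠ []) :
    (p ++ q).head? = p.head? := by
  cases p with
  | nil => exact absurd rfl h
  | cons a l => simp

lemma isPath_last_cases {F : Finset (V × V)} :
    ∀ (p : List V) (b : V), IsPath F p → p.getLast? = some b →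
      p = [b] ∨ ∃ q y, p = q ++ [b] ∧ IsPath F q ∧ q.getLast? = some y ∧ (y, b) ∈ F ∧
        q.head? = p.head? := by
  intro p
  induction p with
  | nil => intro b h; exact absurd h (by simp [IsPath])
  | cons i l ih =>
    cases l with
    | nil => intro b _ hb; simp at hb; subst hb; exact Or.inl rfl
    | cons j l' =>
      intro b h hb
      have hb' : (j :: l').getLast? = some b := by simpa using hb
      rcases ih b h.2 hb' with h1 | ⟨q, y, heq, hq, hqy, hyb, hqh⟩
      · -- j :: l' = [b]
        have hj : j = b := by simpa using congrArg List.head? h1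
        refine Or.inr ⟨[i], i, ?_, trivial, rfl, ?_, rfl⟩
        · simp [h1]
        · rw [← hj]; exact h.1
      · refine Or.inr ⟨i :: q, y, ?_, ?_, ?_, hyb, rfl⟩
        · simp [heq]
        · exact isPath_cons h.1 hq (by rw [hqh]; rfl)
        · cases q with
          | nil => simp at hqh
          | cons a m => simpa using hqy

lemma path_unique {F : Finset (V × V)}
    (hU : ∀ y z i : V, (y, i) ∈ F → (z, i) ∈ F → y = z) (hC : CircuitFree F) :
    ∀ (n : ℕ) (p q : List V), p.length ≤ n → IsPath F p → IsPath F q →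
      p.head? = q.head? → p.getLast? = q.getLast? → p = q := by
  intro n
  induction n with
  | zero =>
    intro p q hl hp
    cases p with
    | nil => exact absurd hp (by simp [IsPath])
    | cons a l => simp at hl
  | succ n ih =>
    intro p q hl hp hq hh hlast
    obtain ⟨b, hb⟩ : ∃ b, p.getLast? = some b := by
      cases p with
      | nil => exact absurd hp (by simp [IsPath])
      | cons a l => exact ⟨_, List.getLast?_cons⟩  -- may need fix
    have hqb : q.getLast? = some b := hlast ▸ hb
    rcases isPath_last_cases p b hp hb with hp1 | ⟨p', y, hpe, hp', hpy, hyb, hph⟩ <;>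
      rcases isPath_last_cases q b hq hqb with hq1 | ⟨q', z, hqe, hq', hqz, hzb, hqh⟩
    · rw [hp1, hq1]
    · -- p = [b], q = q' ++ [b]
      exfalso
      have hhb : q'.head? = some b := by
        rw [hqh, ← hh, hp1]; rfl
      have : Relation.ReflTransGen (Adj F) b z := isPath_rtg q' hq' hhb hqz
      exact hC b (Relation.TransGen.tail' this hzb)
    · exfalso
      have hhb : p'.head? = some b := by
        rw [hph, hh, hq1]; rfl
      have : Relation.ReflTransGen (Adj F) b y := isPath_rtg p' hp' hhb hpy
      exact hC b (Relation.TransGen.tail' this hyb)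
    · have hyz : y = z := hU y z b hyb hzb
      have hlen : p'.length ≤ n := by
        have : p.length = p'.length + 1 := by rw [hpe]; simp
        omega
      have : p' = q' := by
        refine ih p' q' hlen hp' hq' (by rw [hph, hqh, hh]) ?_
        rw [hpy, hqz, hyz]
      rw [hpe, hqe, this]

lemma exists_source {F : Finset (V × V)} (hC : CircuitFree F) (i : V) :
    ∃ r : V, (∀ z, (z, r) ∉ F) ∧ Relation.ReflTransGen (Adj F) r i := by
  suffices H : ∀ (n : ℕ) (i : V),
      (Finset.univ.filter (fun z => Relation.ReflTransGen (Adj F) z i)).card ≤ n →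
      ∃ r : V, (∀ z, (z, r) ∉ F) ∧ Relation.ReflTransGen (Adj F) r i from H _ i le_rfl
  intro n
  induction n with
  | zero =>
    intro i h
    exfalso
    have hi : i ∈ Finset.univ.filter (fun z => Relation.ReflTransGen (Adj F) z i) :=
      Finset.mem_filter.mpr ⟨Finset.mem_univ i, .refl⟩
    have := Finset.card_pos.mpr ⟨i, hi⟩
    omega
  | succ n ih =>
    intro i hcard
    by_cases hz : ∃ z, (z, i) ∈ F
    · obtain ⟨z, hzi⟩ := hz
      have hsub : Finset.univ.filter (fun w => Relation.ReflTransGen (Adj F) w z) ⊆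
          Finset.univ.filter (fun w => Relation.ReflTransGen (Adj F) w i) := by
        intro w hw
        simp only [Finset.mem_filter, Finset.mem_univ, true_and] at hw ⊢
        exact hw.tail hzi
      have hnotin : i ∉ Finset.univ.filter (fun w => Relation.ReflTransGen (Adj F) w z) := by
        simp only [Finset.mem_filter, Finset.mem_univ, true_and]
        intro hiz
        exact hC i (Relation.TransGen.tail' hiz hzi)
      have hlt : (Finset.univ.filter (fun w => Relation.ReflTransGen (Adj F) w z)).card <
          (Finset.univ.filter (fun w => Relation.ReflTransGen (Adj F) w i)).card := by
        refine Finset.card_lt_card ?_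
        refine (Finset.ssubset_iff_of_subset hsub).mpr ⟨i, Finset.mem_filter.mpr ⟨Finset.mem_univ i, .refl⟩, hnotin⟩
      obtain ⟨r, hr, hrz⟩ := ih z (by omega)
      exact ⟨r, hr, hrz.tail hzi⟩
    · exact ⟨i, fun z h => hz ⟨z, h⟩, .refl⟩

lemma rtg_wconn {F : Finset (V × V)} {a b : V}
    (h : Relation.ReflTransGen (Adj F) a b) : WConn F a b :=
  Relation.ReflTransGen.mono (fun _ _ h => Or.inl h) _ _ h

lemma wconn_symm {F : Finset (V × V)} {a b : V} (h : WConn F a b) : WConn F b a :=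
  (@Relation.ReflTransGen.stdSymm _ _ ⟨fun _ _ h => h.symm⟩).symm _ _ h

lemma source_reaches {F : Finset (V × V)}
    (hU : ∀ y z i : V, (y, i) ∈ F → (z, i) ∈ F → y = z) {r : V}
    (hr : ∀ z, (z, r) ∉ F) {i j : V}
    (hri : Relation.ReflTransGen (Adj F) r i) (hij : WConn F i j) :
    Relation.ReflTransGen (Adj F) r j := by
  induction hij with
  | refl => exact hri
  | tail hab hstep ihab =>
    rcases hstep with h1 | h1
    · exact ihab.tail h1
    · rcases Relation.ReflTransGen.cases_tail ihab with h2 | ⟨w, hw, hwb⟩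
      · exact absurd (h2 ▸ h1) (hr _)
      · rw [hU w _ _ hwb h1] at hw
        exact hw

lemma rtg_isPath {F : Finset (V × V)} {a b : V}
    (h : Relation.ReflTransGen (Adj F) a b) :
    ∃ p, IsPath F p ∧ p.head? = some a ∧ p.getLast? = some b := by
  induction h with
  | refl => exact ⟨[a], trivial, rfl, rfl⟩
  | @tail b c hab harc ih =>
    obtain ⟨p, hp, hh, hl⟩ := ih
    refine ⟨p ++ [c], isPath_append p _ _ hp hl harc, ?_, ?_⟩
    · rw [head?_append_left _ (isPath_ne_nil hp), hh]
    · exact List.getLast?_concat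

lemma good_forest {F : Finset (V × V)}
    (hU : ∀ y z i : V, (y, i) ∈ F → (z, i) ∈ F → y = z) (hC : CircuitFree F) :
    IsForest F := by
  intro i
  obtain ⟨r, hr, hri⟩ := exists_source hC i
  refine ⟨r, wconn_symm (rtg_wconn hri), ?_⟩
  intro j hj
  have hrj := source_reaches hU hr hri hj
  obtain ⟨p, hp, hh, hl⟩ := rtg_isPath hrj
  refine ⟨p, ⟨hp, hh, hl⟩, ?_⟩
  rintro q ⟨hq, hqh, hql⟩
  exact path_unique hU hC q.length q p le_rfl hq hp (hqh.trans hh.symm) (hql.trans hl.symm)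

lemma forest_uniqPred {F : Finset (V × V)} (hF : IsForest F) :
    ∀ y z i : V, (y, i) ∈ F → (z, i) ∈ F → y = z := by
  intro y z i hy hz
  obtain ⟨r, hr, hall⟩ := hF i
  have hiy : WConn F i y := Relation.ReflTransGen.single (Or.inr hy)
  have hiz : WConn F i z := Relation.ReflTransGen.single (Or.inr hz)
  obtain ⟨py, ⟨hpy, hpyh, hpyl⟩, _⟩ := hall y hiy
  obtain ⟨pz, ⟨hpz, hpzh, hpzl⟩, _⟩ := hall z hiz
  have hii := hall i Relation.ReflTransGen.refl
  have h1 : IsPath F (py ++ [i]) ∧ (py ++ [i]).head? = some r ∧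
      (py ++ [i]).getLast? = some i :=
    ⟨isPath_append py _ _ hpy hpyl hy,
      by rw [head?_append_left _ (isPath_ne_nil hpy), hpyh], List.getLast?_concat⟩
  have h2 : IsPath F (pz ++ [i]) ∧ (pz ++ [i]).head? = some r ∧
      (pz ++ [i]).getLast? = some i :=
    ⟨isPath_append pz _ _ hpz hpzl hz,
      by rw [head?_append_left _ (isPath_ne_nil hpz), hpzh], List.getLast?_concat⟩
  have heq : py ++ [i] = pz ++ [i] := hii.unique h1 h2
  have : py = pz := by
    have := congrArg List.reverse heq
    simp at this
    exact this
  rw [this] at hpyl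
  rw [hpyl] at hpzl
  exact Option.some_injective _ hpzl

end Aux

/-- a weakly connected circuit-free digraph is quasi-strongly connected
(has a root) iff every maximal spanning forest of it is an arborescence. -/
theorem hasRoot_iff_all_maxForests_arborescence {V : Type*} [Fintype V] [DecidableEq V]
    [Nonempty V] (A : Finset (V × V)) (hA : CircuitFree A) (hw : WeaklyConnected A) :
    HasRoot A ↔ ∀ F ∈ maxForests A, IsArbOn F Set.univ := by
  classical
  constructor
  · rintro ⟨r, hr⟩ F hF
    rw [maxForests, Finset.mem_filter] at hF
    have hFA' : F ⊆ A := hF.2.1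
    have hFor : IsForest F := hF.2.2.1
    have hmax := hF.2.2.2
    have hU := forest_uniqPred hFor
    obtain ⟨ρ, hρ, hρall⟩ := hFor r
    refine ⟨ρ, Set.mem_univ _, fun i _ => ?_⟩
    apply hρall
    show WConn F r i
    by_contra hni
    obtain ⟨r₀, hr₀mem, hr₀all⟩ := hFor i
    have hr₀mem' : WConn F i r₀ := hr₀mem
    have hnopred : ∀ z, (z, r₀) ∉ F := by
      intro z hz
      have hz' : WConn F i z := hr₀mem'.trans (Relation.ReflTransGen.single (Or.inr hz))
      obtain ⟨p, ⟨hp, hh, hl⟩, -⟩ := hr₀all z hz'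
      have hrtg : Relation.ReflTransGen (Adj F) r₀ z := isPath_rtg p hp hh hl
      exact hA r₀ (Relation.TransGen.mono (fun a b h => hFA' h) _ _ (Relation.TransGen.tail' hrtg hz))
    have hr₀r : r₀ ≠ r := by
      rintro rfl
      exact hni (wconn_symm hr₀mem')
    rcases Relation.ReflTransGen.cases_tail (hr r₀) with h | ⟨x, hx, hxr₀⟩
    · exact hr₀r h
    · refine hmax (x, r₀) hxr₀ (hnopred x) ?_
      refine good_forest ?_ ?_
      · intro y z j hy hz
        rcases Finset.mem_insert.mp hy with hy1 | hy1 <;>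
          rcases Finset.mem_insert.mp hz with hz1 | hz1
        · rw [Prod.mk.injEq] at hy1 hz1
          rw [hy1.1, hz1.1]
        · exfalso
          rw [Prod.mk.injEq] at hy1
          rw [hy1.2] at hz1
          exact hnopred z hz1
        · exfalso
          rw [Prod.mk.injEq] at hz1
          rw [hz1.2] at hy1
          exact hnopred y hy1
        · exact hU y z j hy1 hz1
      · intro j hj
        refine hA j (Relation.TransGen.mono (fun a b h => ?_) _ _ hj)
        rcases Finset.mem_insert.mp h with h1 | h1
        · rw [Prod.mk.injEq] at h1
          rw [h1.1, h1.2]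
          exact hxr₀
        · exact hFA' h1
  · intro hall
    have hEmp : IsForest (∅ : Finset (V × V)) := by
      refine good_forest (by simp) ?_
      intro i hi
      cases hi with
      | single h => exact absurd h (by simp [Adj])
      | tail _ h => exact absurd h (by simp [Adj])
    have hS : (A.powerset.filter (fun F => IsForest F)).Nonempty :=
      ⟨∅, Finset.mem_filter.mpr ⟨Finset.mem_powerset.mpr (Finset.empty_subset _), hEmp⟩⟩
    obtain ⟨F, hFS, hFmax⟩ := Finset.exists_max_image _ Finset.card hS
    rw [Finset.mem_filter, Finset.mem_powerset] at hFS
    have hFmem : F ∈ maxForests A := by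
      rw [maxForests, Finset.mem_filter, Finset.mem_powerset]
      refine ⟨hFS.1, hFS.1, hFS.2, ?_⟩
      intro a ha hna hforest
      have hmem : insert a F ∈ A.powerset.filter (fun F => IsForest F) :=
        Finset.mem_filter.mpr ⟨Finset.mem_powerset.mpr (Finset.insert_subset ha hFS.1), hforest⟩
      have := hFmax _ hmem
      rw [Finset.card_insert_of_notMem hna] at this
      omega
    obtain ⟨ρ, -, hρ⟩ := hall F hFmem
    refine ⟨ρ, fun i => ?_⟩
    obtain ⟨p, ⟨hp, hh, hl⟩, -⟩ := hρ i (Set.mem_univ i)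
    exact Relation.ReflTransGen.mono (fun a b h => hFS.1 h) _ _ (isPath_rtg p hp hh hl)
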